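/- Unbiasedness of the per-decision hindsight policy gradient estimator: given N i.i.d. pairs (τ^(i), g^(i)) with g^(i) ~ p(g) and τ^(i) ~ p(τ | g^(i), θ), the estimator (1/N) Σ_i Σ_g p(g) Σ_{t=1}^{T−1} ∇ log p(a_t^(i) | s_t^(i), g, θ) Σ_{t'=t+1}^T [ ∏_{k=1}^{t'−1} p(a_k^(i) | s_k^(i), g, θ)/p(a_k^(i) | s_k^(i), g^(i), θ) ] r(s_{t'}^(i), g) has expectation equal to ∇η(θ). -/

import Mathlib

open Finset

/-- A trajectory `s_1, a_1, …, s_T` with horizon `T = n + 1`. -/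
abbrev Traj (S A : Type) (n : ℕ) := (Fin (n + 1) → S) × (Fin n → A)

/-- `p(τ ∣ g, θ) = p(s_1) ∏_{t=1}^{T-1} p(a_t ∣ s_t, g, θ) p(s_{t+1} ∣ s_t, a_t)`. -/
def trajProb {S A G : Type} (n : ℕ) (init : S → ℝ) (trans : S → A → S → ℝ)
    (pol : ℝ → G → S → A → ℝ) (θ : ℝ) (g : G) (τ : Traj S A n) : ℝ :=
  init (τ.1 0) * ∏ t : Fin n,
    pol θ g (τ.1 t.castSucc) (τ.2 t) * trans (τ.1 t.castSucc) (τ.2 t) (τ.1 t.succ)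

/-- The expected return `η(θ) = ∑_g p(g) ∑_τ p(τ ∣ g, θ) ∑_{t=1}^T r(s_t, g)`. -/
def expReturn {S A G : Type} [Fintype S] [Fintype A] [Fintype G] (n : ℕ)
    (init : S → ℝ) (trans : S → A → S → ℝ) (pol : ℝ → G → S → A → ℝ)
    (pG : G → ℝ) (r : S → G → ℝ) (θ : ℝ) : ℝ :=
  ∑ g : G, pG g * ∑ τ : Traj S A n,
    trajProb n init trans pol θ g τ * ∑ t : Fin (n + 1), r (τ.1 t) g

set_option linter.unusedSectionVars false

lemma sum_pi_succ {X : Type} [Fintype X] (n : ℕ) (G : (Fin (n+1) → X) → ℝ) :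
    ∑ f : Fin (n+1) → X, G f = ∑ x : X, ∑ f : Fin n → X, G (Fin.cons x f) := by
  have h1 := Equiv.sum_comp (Fin.consEquiv fun _ : Fin (n+1) => X) G
  rw [← h1]
  exact Fintype.sum_prod_type (f := fun p : X × (Fin n → X) => G (Fin.cons p.1 p.2))

lemma sum_traj {S A : Type} [Fintype S] [Fintype A] {n : ℕ} (G : Traj S A n → ℝ) :
    ∑ τ : Traj S A n, G τ = ∑ s : Fin (n+1) → S, ∑ a : Fin n → A, G (s, a) :=
  Fintype.sum_prod_type G

lemma sum_traj_succ {S A : Type} [Fintype S] [Fintype A] {n : ℕ} (G : Traj S A (n+1) → ℝ) :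
    ∑ τ : Traj S A (n+1), G τ
      = ∑ s0 : S, ∑ a0 : A, ∑ τ : Traj S A n, G (Fin.cons s0 τ.1, Fin.cons a0 τ.2) := by
  rw [sum_traj, sum_pi_succ]
  refine Finset.sum_congr rfl fun s0 _ => ?_
  calc ∑ sf : Fin (n+1) → S, ∑ a : Fin (n+1) → A, G (Fin.cons s0 sf, a)
      = ∑ sf : Fin (n+1) → S, ∑ a0 : A, ∑ a' : Fin n → A, G (Fin.cons s0 sf, Fin.cons a0 a') :=
        Finset.sum_congr rfl fun sf _ => sum_pi_succ n (fun a => G (Fin.cons s0 sf, a))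
    _ = ∑ a0 : A, ∑ sf : Fin (n+1) → S, ∑ a' : Fin n → A, G (Fin.cons s0 sf, Fin.cons a0 a') :=
        Finset.sum_comm
    _ = ∑ a0 : A, ∑ τ : Traj S A n, G (Fin.cons s0 τ.1, Fin.cons a0 τ.2) :=
        Finset.sum_congr rfl fun a0 _ =>
          (sum_traj (fun τ : Traj S A n => G (Fin.cons s0 τ.1, Fin.cons a0 τ.2))).symm

lemma prod_step_cons {S A : Type} (n : ℕ) (c : Fin (n+1) → S → A → S → ℝ)
    (s0 : S) (a0 : A) (s : Fin (n+1) → S) (a : Fin n → A) :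
    (∏ t : Fin (n+1), c t ((Fin.cons s0 s : Fin (n+2) → S) t.castSucc)
        ((Fin.cons a0 a : Fin (n+1) → A) t) ((Fin.cons s0 s : Fin (n+2) → S) t.succ))
      = c 0 s0 a0 (s 0) * ∏ t : Fin n, c t.succ (s t.castSucc) (a t) (s t.succ) := by
  rw [Fin.prod_univ_succ]
  simp [← Fin.succ_castSucc]

lemma margT {S A : Type} [Fintype S] [Fintype A] :
    ∀ (n : ℕ) (W : S → ℝ) (c : Fin n → S → A → S → ℝ) (μ : Fin n → ℝ),
    (∀ k s, ∑ a : A, ∑ s' : S, c k s a s' = μ k) →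
    ∑ τ : Traj S A n, W (τ.1 0) * ∏ t : Fin n, c t (τ.1 t.castSucc) (τ.2 t) (τ.1 t.succ)
      = (∑ s : S, W s) * ∏ t : Fin n, μ t := by
  intro n
  induction n with
  | zero =>
      intro W c μ _
      rw [sum_traj (fun τ : Traj S A 0 => W (τ.1 0) * ∏ t : Fin 0, c t (τ.1 t.castSucc) (τ.2 t) (τ.1 t.succ))]
      simp only [Finset.univ_eq_empty, Finset.prod_empty, mul_one]
      rw [show (∑ s : Fin 1 → S, ∑ a : Fin 0 → A, W (s 0)) = ∑ s : Fin 1 → S, W (s 0) by simp]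
      exact Equiv.sum_comp (Equiv.funUnique (Fin 1) S) W
  | succ n ih =>
      intro W c μ hc
      rw [sum_traj_succ]
      have inner : ∀ s0 a0, ∑ τ : Traj S A n,
          W ((Fin.cons s0 τ.1 : Fin (n+2) → S) 0) * ∏ t : Fin (n+1),
            c t ((Fin.cons s0 τ.1 : Fin (n+2) → S) t.castSucc) (((Fin.cons a0 τ.2 : Fin (n+1) → A) t))
              ((Fin.cons s0 τ.1 : Fin (n+2) → S) t.succ)
          = W s0 * ((∑ s : S, c 0 s0 a0 s) * ∏ t : Fin n, μ t.succ) := by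
        intro s0 a0
        have : ∀ τ : Traj S A n,
            W ((Fin.cons s0 τ.1 : Fin (n+2) → S) 0) * ∏ t : Fin (n+1),
              c t ((Fin.cons s0 τ.1 : Fin (n+2) → S) t.castSucc) (((Fin.cons a0 τ.2 : Fin (n+1) → A) t))
                ((Fin.cons s0 τ.1 : Fin (n+2) → S) t.succ)
            = W s0 * ((fun x => c 0 s0 a0 x) (τ.1 0) *
                ∏ t : Fin n, c t.succ (τ.1 t.castSucc) (τ.2 t) (τ.1 t.succ)) := by
          intro τ; rw [prod_step_cons]; simp
        rw [Finset.sum_congr rfl fun τ _ => this τ, ← Finset.mul_sum]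
        congr 1
        exact ih (fun x => c 0 s0 a0 x) (fun t => c t.succ) (fun t => μ t.succ)
          (fun k s => hc k.succ s)
      have h2 : ∀ s0, (∑ a0 : A, W s0 * ((∑ s : S, c 0 s0 a0 s) * ∏ t : Fin n, μ t.succ))
          = W s0 * (μ 0 * ∏ t : Fin n, μ t.succ) := by
        intro s0
        rw [← Finset.mul_sum, ← Finset.sum_mul, hc 0 s0]
      rw [Finset.sum_congr rfl fun s0 _ => Finset.sum_congr rfl fun a0 _ => inner s0 a0,
        Finset.sum_congr rfl fun s0 _ => h2 s0, ← Finset.sum_mul, Fin.prod_univ_succ]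

lemma margL {S A : Type} [Fintype S] [Fintype A] :
    ∀ (m n : ℕ) (W : S → ℝ) (c c' : Fin n → S → A → S → ℝ) (μ : Fin n → ℝ)
      (F : Traj S A n → ℝ),
    (∀ k : Fin n, (k : ℕ) < m → c k = c' k) →
    (∀ k : Fin n, m ≤ (k : ℕ) → ∀ s, ∑ a : A, ∑ s' : S, c k s a s' = μ k) →
    (∀ k : Fin n, m ≤ (k : ℕ) → ∀ s, ∑ a : A, ∑ s' : S, c' k s a s' = μ k) →
    (∀ τ τ' : Traj S A n, (∀ k : Fin (n+1), (k : ℕ) ≤ m → τ.1 k = τ'.1 k) →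
      (∀ k : Fin n, (k : ℕ) < m → τ.2 k = τ'.2 k) → F τ = F τ') →
    ∑ τ : Traj S A n, W (τ.1 0) *
        (∏ t : Fin n, c t (τ.1 t.castSucc) (τ.2 t) (τ.1 t.succ)) * F τ
      = ∑ τ : Traj S A n, W (τ.1 0) *
        (∏ t : Fin n, c' t (τ.1 t.castSucc) (τ.2 t) (τ.1 t.succ)) * F τ := by
  intro m
  induction m with
  | zero =>
      intro n W c c' μ F hcc hm hm' hF
      rcases Nat.eq_zero_or_pos n with hn | hn
      · subst hn; simp
      obtain ⟨n', rfl⟩ : ∃ n', n = n' + 1 := ⟨n - 1, by omega⟩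
      rcases isEmpty_or_nonempty S with hS | hS
      · rw [Finset.sum_eq_zero, Finset.sum_eq_zero] <;>
          exact fun τ _ => (hS.false (τ.1 0)).elim
      rcases isEmpty_or_nonempty A with hA | hA
      · rw [Finset.sum_eq_zero, Finset.sum_eq_zero] <;>
          exact fun τ _ => (hA.false (τ.2 ⟨0, hn⟩)).elim
      have hS' : Inhabited S := Classical.inhabited_of_nonempty hS
      have hA' : Inhabited A := Classical.inhabited_of_nonempty hA
      set φ : S → ℝ := fun s => F (fun _ => s, fun _ => default) with hφ
      have hFφ : ∀ τ : Traj S A (n'+1), F τ = φ (τ.1 0) := by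
        intro τ
        apply hF
        · intro k hk
          have : k = 0 := Fin.ext (Nat.le_zero.mp hk)
          rw [this]
        · intro k hk; omega
      have key : ∀ (d : Fin (n'+1) → S → A → S → ℝ),
          (∀ k : Fin (n'+1), ∀ s, ∑ a : A, ∑ s' : S, d k s a s' = μ k) →
          ∑ τ : Traj S A (n'+1), W (τ.1 0) *
            (∏ t, d t (τ.1 t.castSucc) (τ.2 t) (τ.1 t.succ)) * F τ
          = (∑ s : S, W s * φ s) * ∏ t, μ t := by
        intro d hd
        have : ∀ τ : Traj S A (n'+1), W (τ.1 0) *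
            (∏ t, d t (τ.1 t.castSucc) (τ.2 t) (τ.1 t.succ)) * F τ
            = (fun s => W s * φ s) (τ.1 0) *
              ∏ t, d t (τ.1 t.castSucc) (τ.2 t) (τ.1 t.succ) := by
          intro τ; rw [hFφ τ]; ring
        rw [Finset.sum_congr rfl fun τ _ => this τ]
        exact margT (n'+1) (fun s => W s * φ s) d μ hd
      rw [key c (fun k => hm k (Nat.zero_le _)), key c' (fun k => hm' k (Nat.zero_le _))]
  | succ m ih =>
      intro n W c c' μ F hcc hm hm' hF
      rcases Nat.eq_zero_or_pos n with hn | hn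
      · subst hn
        refine Finset.sum_congr rfl fun τ _ => ?_
        simp
      obtain ⟨n', rfl⟩ : ∃ n', n = n' + 1 := ⟨n - 1, by omega⟩
      rw [sum_traj_succ, sum_traj_succ]
      refine Finset.sum_congr rfl fun s0 _ => Finset.sum_congr rfl fun a0 _ => ?_
      have split : ∀ (d : Fin (n'+1) → S → A → S → ℝ) (τ : Traj S A n'),
          W ((Fin.cons s0 τ.1 : Fin (n'+2) → S) 0) *
            (∏ t : Fin (n'+1), d t ((Fin.cons s0 τ.1 : Fin (n'+2) → S) t.castSucc)
              ((Fin.cons a0 τ.2 : Fin (n'+1) → A) t)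
              ((Fin.cons s0 τ.1 : Fin (n'+2) → S) t.succ)) *
            F (Fin.cons s0 τ.1, Fin.cons a0 τ.2)
          = W s0 * ((fun x => d 0 s0 a0 x) (τ.1 0) *
              (∏ t : Fin n', d t.succ (τ.1 t.castSucc) (τ.2 t) (τ.1 t.succ)) *
              F (Fin.cons s0 τ.1, Fin.cons a0 τ.2)) := by
        intro d τ; rw [prod_step_cons]; simp; ring
      rw [Finset.sum_congr rfl fun τ _ => split c τ,
        Finset.sum_congr rfl fun τ _ => split c' τ, ← Finset.mul_sum, ← Finset.mul_sum]
      congr 1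
      have h0 : c 0 = c' 0 := hcc 0 (Nat.succ_pos m)
      have := ih n' (fun x => c 0 s0 a0 x)
        (fun t => c t.succ) (fun t => c' t.succ) (fun t => μ t.succ)
        (fun τ' => F (Fin.cons s0 τ'.1, Fin.cons a0 τ'.2))
        (fun k hk => hcc k.succ (by simpa using Nat.succ_lt_succ hk))
        (fun k hk s => hm k.succ (by simpa using Nat.succ_le_succ hk) s)
        (fun k hk s => hm' k.succ (by simpa using Nat.succ_le_succ hk) s)
        ?_
      · rw [show (fun τ' : Traj S A n' => ((fun x => c 0 s0 a0 x) (τ'.1 0) *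
            (∏ t : Fin n', c t.succ (τ'.1 t.castSucc) (τ'.2 t) (τ'.1 t.succ)) *
            F (Fin.cons s0 τ'.1, Fin.cons a0 τ'.2))) = fun τ' => ((fun x => c 0 s0 a0 x) (τ'.1 0) *
            (∏ t : Fin n', c t.succ (τ'.1 t.castSucc) (τ'.2 t) (τ'.1 t.succ)) *
            F (Fin.cons s0 τ'.1, Fin.cons a0 τ'.2)) from rfl]
        rw [h0] at this ⊢
        exact this
      · intro τ τ' h1 h2
        apply hF
        · intro k
          refine Fin.cases ?_ ?_ k
          · intro _; simp
          · intro i hik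
            simp only [Fin.cons_succ]
            rw [Fin.val_succ] at hik
            exact h1 i (by omega)
        · intro k
          refine Fin.cases ?_ ?_ k
          · intro _; simp
          · intro i hik
            simp only [Fin.cons_succ]
            rw [Fin.val_succ] at hik
            exact h2 i (by omega)

section Helpers

variable {S A G : Type} [Fintype S] [Fintype A] [Fintype G]

lemma sum_trajProb (n : ℕ) (init : S → ℝ) (trans : S → A → S → ℝ)
    (pol : ℝ → G → S → A → ℝ) (θ : ℝ) (g : G) (hinit1 : ∑ s : S, init s = 1)
    (htrans1 : ∀ s a, ∑ s' : S, trans s a s' = 1)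
    (hpol1 : ∀ (θ' : ℝ) (g : G) (s : S), ∑ a : A, pol θ' g s a = 1) :
    ∑ τ : Traj S A n, trajProb n init trans pol θ g τ = 1 := by
  have h := margT n init (fun _ s a s' => pol θ g s a * trans s a s') (fun _ => 1) ?_
  · simpa [trajProb, hinit1] using h
  · intro k s
    simp [← Finset.mul_sum, htrans1, hpol1]

lemma sum_dpol (pol : ℝ → G → S → A → ℝ)
    (hpold : ∀ (g : G) (s : S) (a : A), Differentiable ℝ fun θ' => pol θ' g s a)
    (hpol1 : ∀ (θ' : ℝ) (g : G) (s : S), ∑ a : A, pol θ' g s a = 1)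
    (θ : ℝ) (g : G) (s : S) :
    ∑ a : A, deriv (fun θ' => pol θ' g s a) θ = 0 := by
  have h1 : HasDerivAt (fun θ' => ∑ a : A, pol θ' g s a)
      (∑ a : A, deriv (fun θ' => pol θ' g s a) θ) θ :=
    HasDerivAt.fun_sum fun a _ => ((hpold g s a) θ).hasDerivAt
  have h2 : (fun θ' => ∑ a : A, pol θ' g s a) = fun _ => (1:ℝ) :=
    funext fun θ' => hpol1 θ' g s
  rw [h2] at h1
  exact h1.unique (hasDerivAt_const θ 1)

lemma dlog_eq (pol : ℝ → G → S → A → ℝ)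
    (hpol : ∀ (θ' : ℝ) (g : G) (s : S) (a : A), 0 < pol θ' g s a)
    (hpold : ∀ (g : G) (s : S) (a : A), Differentiable ℝ fun θ' => pol θ' g s a)
    (θ : ℝ) (g : G) (s : S) (a : A) :
    deriv (fun θ'' => Real.log (pol θ'' g s a)) θ
      = deriv (fun θ' => pol θ' g s a) θ / pol θ g s a := by
  exact (((hpold g s a) θ).hasDerivAt.log (ne_of_gt (hpol θ g s a))).deriv

lemma iid_reduce {X : Type} [Fintype X] (q f : X → ℝ) (hq : ∑ x : X, q x = 1)
    (N : ℕ) (hN : 0 < N) :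
    ∑ D : Fin N → X, (∏ i : Fin N, q (D i)) * ((N : ℝ)⁻¹ * ∑ i : Fin N, f (D i))
      = ∑ x : X, q x * f x := by
  have key : ∀ i : Fin N, (∑ D : Fin N → X, (∏ j : Fin N, q (D j)) * f (D i))
      = ∑ x : X, q x * f x := by
    intro i
    have h1 : ∀ D : Fin N → X, (∏ j : Fin N, q (D j)) * f (D i)
        = ∏ j : Fin N, (q (D j) * if j = i then f (D j) else 1) := by
      intro D
      rw [Finset.prod_mul_distrib]
      congr 1
      simp
    rw [Finset.sum_congr rfl fun D _ => h1 D]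
    rw [← Fintype.prod_sum (fun j x => q x * if j = i then f x else 1)]
    have h2 : ∀ j : Fin N, (∑ x : X, (q x * if j = i then f x else 1))
        = if j = i then ∑ x : X, q x * f x else 1 := by
      intro j
      by_cases hj : j = i <;> simp [hj, hq]
    rw [Finset.prod_congr rfl fun j _ => h2 j]
    simp
  calc ∑ D : Fin N → X, (∏ i : Fin N, q (D i)) * ((N : ℝ)⁻¹ * ∑ i : Fin N, f (D i))
      = (N : ℝ)⁻¹ * ∑ i : Fin N, ∑ D : Fin N → X, (∏ j : Fin N, q (D j)) * f (D i) := by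
        rw [Finset.sum_congr rfl fun D (_ : D ∈ univ) =>
          show (∏ i : Fin N, q (D i)) * ((N : ℝ)⁻¹ * ∑ i : Fin N, f (D i))
              = (N : ℝ)⁻¹ * ∑ i : Fin N, (∏ j : Fin N, q (D j)) * f (D i) by
            rw [mul_left_comm, Finset.mul_sum]]
        rw [← Finset.mul_sum, Finset.sum_comm]
    _ = ∑ x : X, q x * f x := by
        rw [Finset.sum_congr rfl fun i _ => key i, Finset.sum_const, Finset.card_univ,
          Fintype.card_fin, nsmul_eq_mul, ← mul_assoc, inv_mul_cancel₀ (by positivity), one_mul]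

end Helpers

noncomputable def Kterm {S A G : Type} [Fintype S] [Fintype A] (n : ℕ) (init : S → ℝ)
    (trans : S → A → S → ℝ) (pol : ℝ → G → S → A → ℝ) (r : S → G → ℝ) (θ : ℝ)
    (g : G) (t : Fin n) (t' : Fin (n+1)) : ℝ :=
  ∑ τ : Traj S A n, init (τ.1 0) *
    (∏ k : Fin n, (if k = t then deriv (fun θ' => pol θ' g (τ.1 k.castSucc) (τ.2 k)) θ
        else pol θ g (τ.1 k.castSucc) (τ.2 k)) * trans (τ.1 k.castSucc) (τ.2 k) (τ.1 k.succ)) *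
    r (τ.1 t') g

section KLemmas

variable {S A G : Type} [Fintype S] [Fintype A] [Fintype G]
variable (n : ℕ) (init : S → ℝ) (trans : S → A → S → ℝ) (pol : ℝ → G → S → A → ℝ)
  (r : S → G → ℝ) (θ : ℝ)
variable (htrans1 : ∀ s a, ∑ s' : S, trans s a s' = 1)
  (hpol : ∀ (θ' : ℝ) (g : G) (s : S) (a : A), 0 < pol θ' g s a)
  (hpold : ∀ (g : G) (s : S) (a : A), Differentiable ℝ fun θ' => pol θ' g s a)
  (hpol1 : ∀ (θ' : ℝ) (g : G) (s : S), ∑ a : A, pol θ' g s a = 1)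

include htrans1 hpold hpol1 in
lemma K0 (g : G) (t : Fin n) (t' : Fin (n+1)) (ht : (t' : ℕ) ≤ (t : ℕ)) :
    Kterm n init trans pol r θ g t t' = 0 := by
  have h := margL (t' : ℕ) n init
    (fun k s a s' => (if k = t then deriv (fun θ' => pol θ' g s a) θ else pol θ g s a)
      * trans s a s')
    (fun k s a s' => (if k = t then 0 else pol θ g s a) * trans s a s')
    (fun k => if k = t then 0 else 1)
    (fun τ => r (τ.1 t') g) ?_ ?_ ?_ ?_
  · rw [Kterm, h, Finset.sum_eq_zero]
    intro τ _
    rw [Finset.prod_eq_zero (Finset.mem_univ t) (by simp)]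
    ring
  · intro k hk
    have : k ≠ t := by
      intro hkt; subst hkt; omega
    simp [this]
  · intro k hk s
    by_cases hkt : k = t
    · subst hkt
      have h1 : ∀ a : A, (∑ s' : S, (if k = k then deriv (fun θ' => pol θ' g s a) θ
            else pol θ g s a) * trans s a s') = deriv (fun θ' => pol θ' g s a) θ := fun a => by
        rw [if_pos rfl, ← Finset.mul_sum, htrans1, mul_one]
      rw [Finset.sum_congr rfl fun a _ => h1 a]
      simpa using sum_dpol pol hpold hpol1 θ g s
    · simp [hkt, ← Finset.mul_sum, htrans1, hpol1]
  · intro k hk s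
    by_cases hkt : k = t
    · subst hkt; simp
    · simp [hkt, ← Finset.mul_sum, htrans1, hpol1]
  · intro τ τ' h1 h2
    show r (τ.1 t') g = r (τ'.1 t') g
    rw [h1 t' le_rfl]

end KLemmas

section KB

variable {S A G : Type} [Fintype S] [Fintype A] [Fintype G]
variable (n : ℕ) (init : S → ℝ) (trans : S → A → S → ℝ) (pol : ℝ → G → S → A → ℝ)
  (r : S → G → ℝ) (θ : ℝ)
variable (htrans1 : ∀ s a, ∑ s' : S, trans s a s' = 1)
  (hpol : ∀ (θ' : ℝ) (g : G) (s : S) (a : A), 0 < pol θ' g s a)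
  (hpold : ∀ (g : G) (s : S) (a : A), Differentiable ℝ fun θ' => pol θ' g s a)
  (hpol1 : ∀ (θ' : ℝ) (g : G) (s : S), ∑ a : A, pol θ' g s a = 1)

include htrans1 hpol hpold hpol1 in
lemma KB (g g' : G) (t : Fin n) (t' : Fin (n+1)) (ht : (t : ℕ) < (t' : ℕ)) :
    ∑ τ : Traj S A n, trajProb n init trans pol θ g' τ *
        (deriv (fun θ'' => Real.log (pol θ'' g (τ.1 t.castSucc) (τ.2 t))) θ *
          ((∏ k : Fin n, if k.castSucc < t' then
              pol θ g (τ.1 k.castSucc) (τ.2 k) / pol θ g' (τ.1 k.castSucc) (τ.2 k) else 1) *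
            r (τ.1 t') g))
      = Kterm n init trans pol r θ g t t' := by
  have hpt : ∀ τ : Traj S A n, trajProb n init trans pol θ g' τ *
      (deriv (fun θ'' => Real.log (pol θ'' g (τ.1 t.castSucc) (τ.2 t))) θ *
        ((∏ k : Fin n, if k.castSucc < t' then
            pol θ g (τ.1 k.castSucc) (τ.2 k) / pol θ g' (τ.1 k.castSucc) (τ.2 k) else 1) *
          r (τ.1 t') g))
      = init (τ.1 0) *
        (∏ k : Fin n, (if k = t then deriv (fun θ' => pol θ' g (τ.1 k.castSucc) (τ.2 k)) θ
            else if k.castSucc < t' then pol θ g (τ.1 k.castSucc) (τ.2 k)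
            else pol θ g' (τ.1 k.castSucc) (τ.2 k)) *
          trans (τ.1 k.castSucc) (τ.2 k) (τ.1 k.succ)) *
        r (τ.1 t') g := by
    intro τ
    rw [trajProb, dlog_eq pol hpol hpold θ g]
    have hsing : deriv (fun θ' => pol θ' g (τ.1 t.castSucc) (τ.2 t)) θ
          / pol θ g (τ.1 t.castSucc) (τ.2 t)
        = ∏ k : Fin n, (if k = t then deriv (fun θ' => pol θ' g (τ.1 k.castSucc) (τ.2 k)) θ
            / pol θ g (τ.1 k.castSucc) (τ.2 k) else 1) := by
      rw [Finset.prod_ite_eq' Finset.univ t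
        (fun k => deriv (fun θ' => pol θ' g (τ.1 k.castSucc) (τ.2 k)) θ
          / pol θ g (τ.1 k.castSucc) (τ.2 k))]
      simp
    rw [hsing]
    have hcomb : (∏ k : Fin n, pol θ g' (τ.1 k.castSucc) (τ.2 k) *
          trans (τ.1 k.castSucc) (τ.2 k) (τ.1 k.succ)) *
        ((∏ k : Fin n, (if k = t then deriv (fun θ' => pol θ' g (τ.1 k.castSucc) (τ.2 k)) θ
            / pol θ g (τ.1 k.castSucc) (τ.2 k) else 1)) *
         (∏ k : Fin n, if k.castSucc < t' then
            pol θ g (τ.1 k.castSucc) (τ.2 k) / pol θ g' (τ.1 k.castSucc) (τ.2 k) else 1))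
      = ∏ k : Fin n, (if k = t then deriv (fun θ' => pol θ' g (τ.1 k.castSucc) (τ.2 k)) θ
            else if k.castSucc < t' then pol θ g (τ.1 k.castSucc) (τ.2 k)
            else pol θ g' (τ.1 k.castSucc) (τ.2 k)) *
          trans (τ.1 k.castSucc) (τ.2 k) (τ.1 k.succ) := by
      rw [← Finset.prod_mul_distrib, ← Finset.prod_mul_distrib]
      refine Finset.prod_congr rfl fun k _ => ?_
      have hg := ne_of_gt (hpol θ g (τ.1 k.castSucc) (τ.2 k))
      have hg' := ne_of_gt (hpol θ g' (τ.1 k.castSucc) (τ.2 k))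
      rcases eq_or_ne k t with rfl | hkt
      · have hlt : k.castSucc < t' := by rw [Fin.lt_def]; simpa using ht
        rw [if_pos rfl, if_pos rfl, if_pos hlt]
        field_simp
      · rw [if_neg hkt, if_neg hkt, one_mul]
        by_cases hlt : k.castSucc < t'
        · rw [if_pos hlt, if_pos hlt]
          field_simp
        · rw [if_neg hlt, if_neg hlt, mul_one]
    rw [← hcomb]
    ring
  rw [Finset.sum_congr rfl fun τ _ => hpt τ]
  rw [Kterm]
  refine margL (t' : ℕ) n init
    (fun k s a s' => (if k = t then deriv (fun θ' => pol θ' g s a) θ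
        else if k.castSucc < t' then pol θ g s a else pol θ g' s a) * trans s a s')
    (fun k s a s' => (if k = t then deriv (fun θ' => pol θ' g s a) θ
        else pol θ g s a) * trans s a s')
    (fun _ => 1) (fun τ => r (τ.1 t') g) ?_ ?_ ?_ ?_
  · intro k hk
    funext s a s'
    rcases eq_or_ne k t with rfl | hkt
    · simp
    · have hlt : k.castSucc < t' := by rw [Fin.lt_def]; simpa using hk
      simp [hkt, hlt]
  · intro k hk s
    have hkt : k ≠ t := fun h => by subst h; omega
    have hlt : ¬ (k.castSucc < t') := by rw [Fin.lt_def]; simp; omega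
    simp only [if_neg hkt, if_neg hlt]
    rw [Finset.sum_congr rfl fun a (_ : a ∈ univ) => by
      rw [← Finset.mul_sum, htrans1, mul_one]]
    exact hpol1 θ g' s
  · intro k hk s
    have hkt : k ≠ t := fun h => by subst h; omega
    simp only [if_neg hkt]
    rw [Finset.sum_congr rfl fun a (_ : a ∈ univ) => by
      rw [← Finset.mul_sum, htrans1, mul_one]]
    exact hpol1 θ g s
  · intro τ τ' h1 h2
    show r (τ.1 t') g = r (τ'.1 t') g
    rw [h1 t' le_rfl]

end KB

section DerivER

variable {S A G : Type} [Fintype S] [Fintype A] [Fintype G]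
variable (n : ℕ) (init : S → ℝ) (trans : S → A → S → ℝ) (pol : ℝ → G → S → A → ℝ)
  (pG : G → ℝ) (r : S → G → ℝ) (θ : ℝ)
variable (hpold : ∀ (g : G) (s : S) (a : A), Differentiable ℝ fun θ' => pol θ' g s a)

include hpold in
lemma deriv_expReturn :
    deriv (expReturn n init trans pol pG r) θ
      = ∑ g : G, pG g * ∑ t : Fin n, ∑ t' : Fin (n+1),
          Kterm n init trans pol r θ g t t' := by
  have hstep : ∀ (g : G) (τ : Traj S A n) (k : Fin n),
      HasDerivAt (fun θ' => pol θ' g (τ.1 k.castSucc) (τ.2 k) *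
          trans (τ.1 k.castSucc) (τ.2 k) (τ.1 k.succ))
        (deriv (fun θ' => pol θ' g (τ.1 k.castSucc) (τ.2 k)) θ *
          trans (τ.1 k.castSucc) (τ.2 k) (τ.1 k.succ)) θ :=
    fun g τ k => ((hpold g (τ.1 k.castSucc) (τ.2 k)) θ).hasDerivAt.mul_const _
  have hP : ∀ (g : G) (τ : Traj S A n),
      HasDerivAt (fun θ' => trajProb n init trans pol θ' g τ)
        (init (τ.1 0) * ∑ t : Fin n,
          (∏ k ∈ Finset.univ.erase t, pol θ g (τ.1 k.castSucc) (τ.2 k) *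
            trans (τ.1 k.castSucc) (τ.2 k) (τ.1 k.succ)) •
          (deriv (fun θ' => pol θ' g (τ.1 t.castSucc) (τ.2 t)) θ *
            trans (τ.1 t.castSucc) (τ.2 t) (τ.1 t.succ))) θ := by
    intro g τ
    exact HasDerivAt.const_mul _ (HasDerivAt.fun_finsetProd (fun k _ => hstep g τ k))
  have hE : HasDerivAt (expReturn n init trans pol pG r)
      (∑ g : G, pG g * ∑ τ : Traj S A n,
        (init (τ.1 0) * ∑ t : Fin n,
          (∏ k ∈ Finset.univ.erase t, pol θ g (τ.1 k.castSucc) (τ.2 k) *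
            trans (τ.1 k.castSucc) (τ.2 k) (τ.1 k.succ)) •
          (deriv (fun θ' => pol θ' g (τ.1 t.castSucc) (τ.2 t)) θ *
            trans (τ.1 t.castSucc) (τ.2 t) (τ.1 t.succ))) *
        (∑ t : Fin (n+1), r (τ.1 t) g)) θ := by
    apply HasDerivAt.fun_sum
    intro g _
    exact HasDerivAt.const_mul _ (HasDerivAt.fun_sum fun τ _ => (hP g τ).mul_const _)
  rw [hE.deriv]
  refine Finset.sum_congr rfl fun g _ => ?_
  congr 1
  have hpw : ∀ τ : Traj S A n,
      (init (τ.1 0) * ∑ t : Fin n,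
        (∏ k ∈ Finset.univ.erase t, pol θ g (τ.1 k.castSucc) (τ.2 k) *
          trans (τ.1 k.castSucc) (τ.2 k) (τ.1 k.succ)) •
        (deriv (fun θ' => pol θ' g (τ.1 t.castSucc) (τ.2 t)) θ *
          trans (τ.1 t.castSucc) (τ.2 t) (τ.1 t.succ))) *
      (∑ t' : Fin (n+1), r (τ.1 t') g)
      = ∑ t : Fin n, ∑ t' : Fin (n+1), init (τ.1 0) *
          (∏ k : Fin n, (if k = t then deriv (fun θ' => pol θ' g (τ.1 k.castSucc) (τ.2 k)) θ
              else pol θ g (τ.1 k.castSucc) (τ.2 k)) *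
            trans (τ.1 k.castSucc) (τ.2 k) (τ.1 k.succ)) *
          r (τ.1 t') g := by
    intro τ
    have hprod : ∀ t : Fin n,
        (∏ k ∈ Finset.univ.erase t, pol θ g (τ.1 k.castSucc) (τ.2 k) *
          trans (τ.1 k.castSucc) (τ.2 k) (τ.1 k.succ)) *
        (deriv (fun θ' => pol θ' g (τ.1 t.castSucc) (τ.2 t)) θ *
          trans (τ.1 t.castSucc) (τ.2 t) (τ.1 t.succ))
        = ∏ k : Fin n, (if k = t then deriv (fun θ' => pol θ' g (τ.1 k.castSucc) (τ.2 k)) θ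
              else pol θ g (τ.1 k.castSucc) (τ.2 k)) *
            trans (τ.1 k.castSucc) (τ.2 k) (τ.1 k.succ) := by
      intro t
      have h1 := Finset.mul_prod_erase Finset.univ
        (fun k : Fin n => (if k = t then deriv (fun θ' => pol θ' g (τ.1 k.castSucc) (τ.2 k)) θ
            else pol θ g (τ.1 k.castSucc) (τ.2 k)) *
          trans (τ.1 k.castSucc) (τ.2 k) (τ.1 k.succ)) (Finset.mem_univ t)
      rw [← h1]
      show _ = (if t = t then deriv (fun θ' => pol θ' g (τ.1 t.castSucc) (τ.2 t)) θ
            else pol θ g (τ.1 t.castSucc) (τ.2 t)) *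
          trans (τ.1 t.castSucc) (τ.2 t) (τ.1 t.succ) *
          ∏ k ∈ Finset.univ.erase t,
            (if k = t then deriv (fun θ' => pol θ' g (τ.1 k.castSucc) (τ.2 k)) θ
              else pol θ g (τ.1 k.castSucc) (τ.2 k)) *
            trans (τ.1 k.castSucc) (τ.2 k) (τ.1 k.succ)
      have h2 : ∀ k ∈ Finset.univ.erase t,
          (if k = t then deriv (fun θ' => pol θ' g (τ.1 k.castSucc) (τ.2 k)) θ
            else pol θ g (τ.1 k.castSucc) (τ.2 k)) *
            trans (τ.1 k.castSucc) (τ.2 k) (τ.1 k.succ)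
          = pol θ g (τ.1 k.castSucc) (τ.2 k) * trans (τ.1 k.castSucc) (τ.2 k) (τ.1 k.succ) :=
        fun k hk => by rw [if_neg (Finset.mem_erase.mp hk).1]
      rw [if_pos rfl, Finset.prod_congr rfl h2]
      ring
    simp only [smul_eq_mul]
    rw [Finset.sum_congr rfl fun t (_ : t ∈ (univ : Finset (Fin n))) => hprod t]
    rw [Finset.mul_sum, Finset.mul_sum]
    rw [show (∑ t' : Fin (n+1), (∑ t : Fin n, init (τ.1 0) * ∏ k : Fin n, (if k = t then deriv (fun θ' => pol θ' g (τ.1 k.castSucc) (τ.2 k)) θ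
              else pol θ g (τ.1 k.castSucc) (τ.2 k)) * trans (τ.1 k.castSucc) (τ.2 k) (τ.1 k.succ)) * r (τ.1 t') g)
        = ∑ t' : Fin (n+1), ∑ t : Fin n, (init (τ.1 0) * ∏ k : Fin n, (if k = t then deriv (fun θ' => pol θ' g (τ.1 k.castSucc) (τ.2 k)) θ
              else pol θ g (τ.1 k.castSucc) (τ.2 k)) * trans (τ.1 k.castSucc) (τ.2 k) (τ.1 k.succ)) * r (τ.1 t') g from
      Finset.sum_congr rfl fun t' _ => Finset.sum_mul _ _ _]
    exact Finset.sum_comm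
  rw [Finset.sum_congr rfl fun τ _ => hpw τ]
  rw [Finset.sum_comm]
  refine Finset.sum_congr rfl fun t _ => Finset.sum_comm

end DerivER

/-- unbiasedness of the per-decision hindsight policy gradient estimator.
Given `N` i.i.d. pairs `(τ⁽ⁱ⁾, g⁽ⁱ⁾)` with `g⁽ⁱ⁾ ∼ p(g)` and `τ⁽ⁱ⁾ ∼ p(τ ∣ g⁽ⁱ⁾, θ)`,
the estimator `(1/N) ∑_i ∑_g p(g) ∑_{t=1}^{T-1} ∇ log p(a_t⁽ⁱ⁾ ∣ s_t⁽ⁱ⁾, g, θ)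
∑_{t'=t+1}^T [∏_{k=1}^{t'-1} p(a_k⁽ⁱ⁾∣s_k⁽ⁱ⁾,g,θ)/p(a_k⁽ⁱ⁾∣s_k⁽ⁱ⁾,g⁽ⁱ⁾,θ)] r(s_{t'}⁽ⁱ⁾, g)`
has expectation `∇η(θ)`. -/
theorem per_decision_hindsight_estimator_unbiased {S A G : Type}
    [Fintype S] [Fintype A] [Fintype G]
    (n : ℕ) (init : S → ℝ) (trans : S → A → S → ℝ) (pol : ℝ → G → S → A → ℝ)
    (pG : G → ℝ) (r : S → G → ℝ)
    (hinit : ∀ s, 0 < init s) (hinit1 : ∑ s : S, init s = 1)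
    (htrans : ∀ s a s', 0 < trans s a s') (htrans1 : ∀ s a, ∑ s' : S, trans s a s' = 1)
    (hpol : ∀ (θ' : ℝ) (g : G) (s : S) (a : A), 0 < pol θ' g s a)
    (hpold : ∀ (g : G) (s : S) (a : A), Differentiable ℝ fun θ' => pol θ' g s a)
    (hpol1 : ∀ (θ' : ℝ) (g : G) (s : S), ∑ a : A, pol θ' g s a = 1)
    (hpG : ∀ g, 0 ≤ pG g) (hpG1 : ∑ g : G, pG g = 1)
    (θ : ℝ) (N : ℕ) (hN : 0 < N) :
    (∑ D : Fin N → Traj S A n × G,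
        (∏ i : Fin N, pG (D i).2 * trajProb n init trans pol θ (D i).2 (D i).1) *
          ((N : ℝ)⁻¹ * ∑ i : Fin N,
            ∑ g : G, pG g * ∑ t : Fin n,
              deriv (fun θ'' => Real.log (pol θ'' g ((D i).1.1 t.castSucc) ((D i).1.2 t))) θ *
                ∑ t' ∈ univ.filter (fun t' : Fin (n + 1) => t.castSucc < t'),
                  (∏ k : Fin n,
                      if k.castSucc < t' then
                        pol θ g ((D i).1.1 k.castSucc) ((D i).1.2 k) /
                          pol θ (D i).2 ((D i).1.1 k.castSucc) ((D i).1.2 k)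
                      else 1) *
                    r ((D i).1.1 t') g)) =
      deriv (expReturn n init trans pol pG r) θ := by
  classical
  set q : Traj S A n × G → ℝ := fun x => pG x.2 * trajProb n init trans pol θ x.2 x.1 with hqdef
  set f : Traj S A n × G → ℝ := fun x => ∑ g : G, pG g * ∑ t : Fin n,
      deriv (fun θ'' => Real.log (pol θ'' g (x.1.1 t.castSucc) (x.1.2 t))) θ *
        ∑ t' ∈ univ.filter (fun t' : Fin (n + 1) => t.castSucc < t'),
          (∏ k : Fin n, if k.castSucc < t' then
              pol θ g (x.1.1 k.castSucc) (x.1.2 k) / pol θ x.2 (x.1.1 k.castSucc) (x.1.2 k)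
            else 1) * r (x.1.1 t') g with hfdef
  have hq : ∑ x : Traj S A n × G, q x = 1 := by
    rw [Fintype.sum_prod_type (f := q)]
    rw [Finset.sum_comm]
    have hg1 : ∀ g : G, (∑ τ : Traj S A n, q (τ, g)) = pG g := by
      intro g
      simp only [hqdef]
      rw [← Finset.mul_sum, sum_trajProb n init trans pol θ g hinit1 htrans1 hpol1, mul_one]
    rw [Finset.sum_congr rfl fun g _ => hg1 g]
    exact hpG1
  have h1 : (∑ D : Fin N → Traj S A n × G,
        (∏ i : Fin N, pG (D i).2 * trajProb n init trans pol θ (D i).2 (D i).1) *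
          ((N : ℝ)⁻¹ * ∑ i : Fin N,
            ∑ g : G, pG g * ∑ t : Fin n,
              deriv (fun θ'' => Real.log (pol θ'' g ((D i).1.1 t.castSucc) ((D i).1.2 t))) θ *
                ∑ t' ∈ univ.filter (fun t' : Fin (n + 1) => t.castSucc < t'),
                  (∏ k : Fin n,
                      if k.castSucc < t' then
                        pol θ g ((D i).1.1 k.castSucc) ((D i).1.2 k) /
                          pol θ (D i).2 ((D i).1.1 k.castSucc) ((D i).1.2 k)
                      else 1) *
                    r ((D i).1.1 t') g))
      = ∑ x : Traj S A n × G, q x * f x := iid_reduce q f hq N hN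
  rw [h1, deriv_expReturn n init trans pol pG r θ hpold]
  have hx : ∀ x : Traj S A n × G, q x * f x
      = ∑ g : G, ∑ t : Fin n, ∑ t' ∈ univ.filter (fun t' : Fin (n + 1) => t.castSucc < t'),
          (pG g * pG x.2) * (trajProb n init trans pol θ x.2 x.1 *
            (deriv (fun θ'' => Real.log (pol θ'' g (x.1.1 t.castSucc) (x.1.2 t))) θ *
              ((∏ k : Fin n, if k.castSucc < t' then
                  pol θ g (x.1.1 k.castSucc) (x.1.2 k) / pol θ x.2 (x.1.1 k.castSucc) (x.1.2 k)
                else 1) * r (x.1.1 t') g))) := by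
    intro x
    simp only [hqdef, hfdef]
    rw [Finset.mul_sum]
    refine Finset.sum_congr rfl fun g _ => ?_
    rw [Finset.mul_sum, Finset.mul_sum]
    refine Finset.sum_congr rfl fun t _ => ?_
    rw [Finset.mul_sum, Finset.mul_sum, Finset.mul_sum]
    refine Finset.sum_congr rfl fun t' _ => ?_
    ring
  rw [Finset.sum_congr rfl fun x _ => hx x]
  rw [Finset.sum_comm]
  refine Finset.sum_congr rfl fun g _ => ?_
  rw [Finset.sum_comm, Finset.mul_sum]
  refine Finset.sum_congr rfl fun t _ => ?_
  rw [Finset.sum_comm, Finset.mul_sum]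
  -- now handle the t' ranges: RHS is over all t', LHS over filter
  rw [← Finset.sum_filter_add_sum_filter_not (univ : Finset (Fin (n+1)))
    (fun t' => t.castSucc < t') (fun t' => pG g * Kterm n init trans pol r θ g t t')]
  have hzero : ∑ t' ∈ univ.filter (fun t' : Fin (n + 1) => ¬ t.castSucc < t'),
      pG g * Kterm n init trans pol r θ g t t' = 0 := by
    refine Finset.sum_eq_zero fun t' ht' => ?_
    have h2 := (Finset.mem_filter.mp ht').2
    have h3 : (t' : ℕ) ≤ (t : ℕ) := by
      rw [Fin.lt_def, Fin.coe_castSucc, not_lt] at h2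
      exact h2
    rw [K0 n init trans pol r θ htrans1 hpold hpol1 g t t' h3, mul_zero]
  rw [hzero, add_zero]
  refine Finset.sum_congr rfl fun t' ht' => ?_
  have hlt : (t : ℕ) < (t' : ℕ) := by
    have h2 := (Finset.mem_filter.mp ht').2
    rwa [Fin.lt_def, Fin.coe_castSucc] at h2
  rw [Fintype.sum_prod_type (f := fun x : Traj S A n × G =>
      (pG g * pG x.2) * (trajProb n init trans pol θ x.2 x.1 *
        (deriv (fun θ'' => Real.log (pol θ'' g (x.1.1 t.castSucc) (x.1.2 t))) θ *
          ((∏ k : Fin n, if k.castSucc < t' then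
              pol θ g (x.1.1 k.castSucc) (x.1.2 k) / pol θ x.2 (x.1.1 k.castSucc) (x.1.2 k)
            else 1) * r (x.1.1 t') g))))]
  rw [Finset.sum_comm]
  have hinner : ∀ g' : G, (∑ τ : Traj S A n,
      (pG g * pG g') * (trajProb n init trans pol θ g' τ *
        (deriv (fun θ'' => Real.log (pol θ'' g (τ.1 t.castSucc) (τ.2 t))) θ *
          ((∏ k : Fin n, if k.castSucc < t' then
              pol θ g (τ.1 k.castSucc) (τ.2 k) / pol θ g' (τ.1 k.castSucc) (τ.2 k)
            else 1) * r (τ.1 t') g))))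
      = (pG g * pG g') * Kterm n init trans pol r θ g t t' := by
    intro g'
    rw [← Finset.mul_sum]
    rw [KB n init trans pol r θ htrans1 hpol hpold hpol1 g g' t t' hlt]
  rw [Finset.sum_congr rfl fun g' _ => hinner g']
  rw [← Finset.sum_mul, ← Finset.mul_sum, hpG1, mul_one]
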